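/- arXiv:2401.09151 — 2 statements merged into one kernel-verified Lean document; each statement's English description precedes it below -/
import Mathlib

section
/- Let k be a commutative ring and let H_1, H_2 be conilpotent coaugmented coalgebras over k. Then the tensor product coaugmented coalgebra H_1 ⊗ H_2 is conilpotent. -/
open TensorProduct

noncomputable section

universe u

variable (R : Type u) [CommRing R]

/-- `Tpow R H n` is the `n`-th tensor power `H^{⊗n}` of the `R`-module `H`,
defined recursively by `H^{⊗0} = R` and `H^{⊗(n+1)} = H ⊗ H^{⊗n}`. -/
def Tpow (H : Type u) [AddCommGroup H] [Module R H] : ℕ → ModuleCat.{u} R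
  | 0 => ModuleCat.of R R
  | n + 1 => ModuleCat.of R (H ⊗[R] (Tpow H n))

variable {R}
variable {H : Type u} [AddCommGroup H] [Module R H]

/-- The iterated comultiplication `Δ^{(n)} : H → H^{⊗n}`:
`Δ^{(0)} = ε`, `Δ^{(1)} = id` (as the canonical map `H ≅ H ⊗ R`), and
`Δ^{(n+1)} = (Δ ⊗ id^{⊗(n−1)}) ∘ Δ^{(n)}`. -/
def iterComul (Δc : H →ₗ[R] H ⊗[R] H) (εc : H →ₗ[R] R) : (n : ℕ) → (H →ₗ[R] Tpow R H n)
  | 0 => εc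
  | 1 => (TensorProduct.rid R H).symm.toLinearMap
  | n + 2 =>
      (TensorProduct.assoc R H H (Tpow R H n)).toLinearMap
        ∘ₗ (LinearMap.rTensor (Tpow R H n) Δc)
        ∘ₗ (iterComul Δc εc (n + 1))

/-- The `n`-fold tensor power `e^{⊗n} : H^{⊗n} → H^{⊗n}` of a linear endomorphism `e`. -/
def mapPow (e : H →ₗ[R] H) : (n : ℕ) → (Tpow R H n →ₗ[R] Tpow R H n)
  | 0 => LinearMap.id
  | n + 1 => TensorProduct.map e (mapPow e n)

/-- `e_H := id − η ∘ ε`, where `η : R → H` is the coaugmentation `r ↦ r • u` sending `1` to `u`. -/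
def eAug (εc : H →ₗ[R] R) (u : H) : H →ₗ[R] H :=
  LinearMap.id - (LinearMap.toSpanSingleton R H u) ∘ₗ εc

/-- `δ^n := e_H^{⊗n} ∘ Δ^{(n)} : H → H^{⊗n}`. -/
def deltaPow (Δc : H →ₗ[R] H ⊗[R] H) (εc : H →ₗ[R] R) (u : H) (n : ℕ) :
    H →ₗ[R] Tpow R H n :=
  (mapPow (eAug εc u) n) ∘ₗ (iterComul Δc εc n)

/-- The `n`-th term `P_n(H) := ker (δ^{n+1})` of the coradical filtration. -/
def corad (Δc : H →ₗ[R] H ⊗[R] H) (εc : H →ₗ[R] R) (u : H) (n : ℕ) : Submodule R H :=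
  LinearMap.ker (deltaPow Δc εc u (n + 1))

section TensorCoalgebra

variable {R : Type u} [CommRing R]
variable {H₁ H₂ : Type u} [AddCommGroup H₁] [Module R H₁] [AddCommGroup H₂] [Module R H₂]

/-- The comultiplication `(id ⊗ swap ⊗ id) ∘ (Δ₁ ⊗ Δ₂)` of the tensor product coalgebra. -/
def tensorComul (Δ₁ : H₁ →ₗ[R] H₁ ⊗[R] H₁) (Δ₂ : H₂ →ₗ[R] H₂ ⊗[R] H₂) :
    (H₁ ⊗[R] H₂) →ₗ[R] (H₁ ⊗[R] H₂) ⊗[R] (H₁ ⊗[R] H₂) :=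
  (TensorProduct.tensorTensorTensorComm R H₁ H₁ H₂ H₂).toLinearMap
    ∘ₗ TensorProduct.map Δ₁ Δ₂

/-- The counit `ε₁ ⊗ ε₂` of the tensor product coalgebra. -/
def tensorCounit (ε₁ : H₁ →ₗ[R] R) (ε₂ : H₂ →ₗ[R] R) : (H₁ ⊗[R] H₂) →ₗ[R] R :=
  (TensorProduct.lid R R).toLinearMap ∘ₗ TensorProduct.map ε₁ ε₂

end TensorCoalgebra

section Generic
variable (Δc : H →ₗ[R] H ⊗[R] H) (εc : H →ₗ[R] R) (u : H)

/-- the projection `η ∘ ε`. -/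
def Pu : H →ₗ[R] H := (LinearMap.toSpanSingleton R H u) ∘ₗ εc

/-- mixed pattern maps -/
def mixed : (n : ℕ) → (ℕ → Bool) → (H →ₗ[R] Tpow R H n)
  | 0, _ => εc
  | n + 1, f =>
      TensorProduct.map (cond (f 0) (eAug εc u) (Pu εc u)) (mixed n (f ∘ Nat.succ)) ∘ₗ Δc

/-- number of `true` slots among the first `n`. -/
def cnt : (n : ℕ) → (ℕ → Bool) → ℕ
  | 0, _ => 0
  | n + 1, f => cond (f 0) (cnt n (f ∘ Nat.succ) + 1) (cnt n (f ∘ Nat.succ))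

variable {εc u} in
theorem eAug_u (hεu : εc u = 1) : eAug εc u u = 0 := by
  simp [eAug, hεu]

variable {Δc εc u} in
theorem key3 (hεu : εc u = 1) (hΔu : Δc u = u ⊗ₜ[R] u) :
    (TensorProduct.map (eAug εc u) (eAug εc u) ∘ₗ Δc) ∘ₗ (eAug εc u)
      = TensorProduct.map (eAug εc u) (eAug εc u) ∘ₗ Δc := by
  ext x
  simp only [LinearMap.comp_apply, eAug, LinearMap.sub_apply, LinearMap.id_apply,
    LinearMap.toSpanSingleton_apply, map_sub, hΔu]
  simp [map_sub, map_smul, hΔu, hεu, eAug_u hεu]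

variable {Δc εc} in
theorem iterComul_succ
    (hco : (TensorProduct.assoc R H H H).toLinearMap ∘ₗ Δc.rTensor H ∘ₗ Δc = Δc.lTensor H ∘ₗ Δc)
    (hl : εc.lTensor H ∘ₗ Δc = (TensorProduct.mk R H R).flip 1) :
    ∀ n, iterComul Δc εc (n + 1) = LinearMap.lTensor H (iterComul Δc εc n) ∘ₗ Δc
  | 0 => by
      show (TensorProduct.rid R H).symm.toLinearMap = LinearMap.lTensor H εc ∘ₗ Δc
      rw [hl]
      ext x
      exact TensorProduct.rid_symm_apply x
  | n + 1 => by
      have IH := iterComul_succ hco hl n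
      have swap1 : (LinearMap.rTensor (Tpow R H n) Δc)
            ∘ₗ (LinearMap.lTensor H (iterComul Δc εc n))
          = (LinearMap.lTensor (H ⊗[R] H) (iterComul Δc εc n)) ∘ₗ (LinearMap.rTensor H Δc) := by
        rw [LinearMap.rTensor_comp_lTensor, LinearMap.lTensor_comp_rTensor]
      have swap2 : (TensorProduct.assoc R H H (Tpow R H n)).toLinearMap
            ∘ₗ (LinearMap.lTensor (H ⊗[R] H) (iterComul Δc εc n))
          = (LinearMap.lTensor H (LinearMap.lTensor H (iterComul Δc εc n)))
            ∘ₗ (TensorProduct.assoc R H H H).toLinearMap := by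
        have := TensorProduct.map_map_comp_assoc_eq (LinearMap.id (M := H))
          (LinearMap.id (M := H)) (iterComul Δc εc n)
        simpa [LinearMap.lTensor, TensorProduct.map_id] using this.symm
      calc @id (H →ₗ[R] H ⊗[R] (H ⊗[R] Tpow R H n)) (iterComul Δc εc (n + 2))
          = (TensorProduct.assoc R H H (Tpow R H n)).toLinearMap
              ∘ₗ (LinearMap.rTensor (Tpow R H n) Δc)
              ∘ₗ (LinearMap.lTensor H (iterComul Δc εc n) ∘ₗ Δc) := by
            show _ ∘ₗ _ ∘ₗ iterComul Δc εc (n+1) = _; rw [IH]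
            rfl
        _ = (TensorProduct.assoc R H H (Tpow R H n)).toLinearMap
              ∘ₗ ((LinearMap.rTensor (Tpow R H n) Δc
                ∘ₗ LinearMap.lTensor H (iterComul Δc εc n)) ∘ₗ Δc) := by
            rw [LinearMap.comp_assoc]
        _ = (TensorProduct.assoc R H H (Tpow R H n)).toLinearMap
              ∘ₗ ((LinearMap.lTensor (H ⊗[R] H) (iterComul Δc εc n)
                ∘ₗ LinearMap.rTensor H Δc) ∘ₗ Δc) := by rw [swap1]
        _ = ((TensorProduct.assoc R H H (Tpow R H n)).toLinearMap
              ∘ₗ LinearMap.lTensor (H ⊗[R] H) (iterComul Δc εc n))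
              ∘ₗ (LinearMap.rTensor H Δc ∘ₗ Δc) := by
            rw [LinearMap.comp_assoc, LinearMap.comp_assoc]
        _ = (LinearMap.lTensor H (LinearMap.lTensor H (iterComul Δc εc n))
              ∘ₗ (TensorProduct.assoc R H H H).toLinearMap)
              ∘ₗ (LinearMap.rTensor H Δc ∘ₗ Δc) := by rw [swap2]
        _ = LinearMap.lTensor H (LinearMap.lTensor H (iterComul Δc εc n))
              ∘ₗ ((TensorProduct.assoc R H H H).toLinearMap
                ∘ₗ LinearMap.rTensor H Δc ∘ₗ Δc) := by rw [LinearMap.comp_assoc]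
        _ = LinearMap.lTensor H (LinearMap.lTensor H (iterComul Δc εc n))
              ∘ₗ (Δc.lTensor H ∘ₗ Δc) := by rw [hco]
        _ = (LinearMap.lTensor H (LinearMap.lTensor H (iterComul Δc εc n))
              ∘ₗ Δc.lTensor H) ∘ₗ Δc := by rw [LinearMap.comp_assoc]
        _ = @id (H →ₗ[R] H ⊗[R] (H ⊗[R] Tpow R H n))
              (LinearMap.lTensor H (iterComul Δc εc (n + 1)) ∘ₗ Δc) := by
            rw [← LinearMap.lTensor_comp, ← IH] <;> rfl

variable {Δc εc u}

theorem deltaPow_succ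
    (hco : (TensorProduct.assoc R H H H).toLinearMap ∘ₗ Δc.rTensor H ∘ₗ Δc = Δc.lTensor H ∘ₗ Δc)
    (hl : εc.lTensor H ∘ₗ Δc = (TensorProduct.mk R H R).flip 1) (n : ℕ) :
    deltaPow Δc εc u (n + 1)
      = TensorProduct.map (eAug εc u) (deltaPow Δc εc u n) ∘ₗ Δc := by
  show TensorProduct.map (eAug εc u) (mapPow (eAug εc u) n) ∘ₗ iterComul Δc εc (n + 1) = _
  rw [iterComul_succ hco hl n, ← LinearMap.comp_assoc]
  congr 1
  rw [show LinearMap.lTensor H (iterComul Δc εc n)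
      = TensorProduct.map LinearMap.id (iterComul Δc εc n) from rfl, ← TensorProduct.map_comp]
  rfl

theorem falsestep (hr : εc.rTensor H ∘ₗ Δc = TensorProduct.mk R R H 1)
    {X : Type u} [AddCommGroup X] [Module R X] (g : H →ₗ[R] X) :
    TensorProduct.map (Pu εc u) g ∘ₗ Δc = (TensorProduct.mk R H X) u ∘ₗ g := by
  calc TensorProduct.map (Pu εc u) g ∘ₗ Δc
      = (TensorProduct.map (LinearMap.toSpanSingleton R H u) g
          ∘ₗ LinearMap.rTensor H εc) ∘ₗ Δc := by
        rw [show LinearMap.rTensor H εc = TensorProduct.map εc LinearMap.id from rfl,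
          ← TensorProduct.map_comp]
        rfl
    _ = TensorProduct.map (LinearMap.toSpanSingleton R H u) g ∘ₗ (εc.rTensor H ∘ₗ Δc) := by
        rw [LinearMap.comp_assoc]
    _ = TensorProduct.map (LinearMap.toSpanSingleton R H u) g ∘ₗ TensorProduct.mk R R H 1 := by
        rw [hr]
    _ = (TensorProduct.mk R H X) u ∘ₗ g := by
        ext x; simp

theorem deltaPow_ssucc
    (hco : (TensorProduct.assoc R H H H).toLinearMap ∘ₗ Δc.rTensor H ∘ₗ Δc = Δc.lTensor H ∘ₗ Δc)
    (hl : εc.lTensor H ∘ₗ Δc = (TensorProduct.mk R H R).flip 1)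
    (hεu : εc u = 1) (hΔu : Δc u = u ⊗ₜ[R] u) (n : ℕ) :
    deltaPow Δc εc u (n + 2)
      = (TensorProduct.assoc R H H (Tpow R H n)).toLinearMap
        ∘ₗ LinearMap.rTensor (Tpow R H n)
            (TensorProduct.map (eAug εc u) (eAug εc u) ∘ₗ Δc)
        ∘ₗ deltaPow Δc εc u (n + 1) := by
  have k3 := key3 (Δc := Δc) hεu hΔu
  calc @id (H →ₗ[R] H ⊗[R] (H ⊗[R] Tpow R H n)) (deltaPow Δc εc u (n + 2))
      = TensorProduct.map (eAug εc u)
          (TensorProduct.map (eAug εc u) (deltaPow Δc εc u n) ∘ₗ Δc) ∘ₗ Δc := by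
        rw [deltaPow_succ hco hl (n+1), deltaPow_succ hco hl n]
        rfl
    _ = TensorProduct.map (eAug εc u)
          (TensorProduct.map (eAug εc u) (deltaPow Δc εc u n)) ∘ₗ (Δc.lTensor H ∘ₗ Δc) := by
        rw [← LinearMap.comp_assoc]
        congr 1
        rw [show Δc.lTensor H = TensorProduct.map LinearMap.id Δc from rfl,
          ← TensorProduct.map_comp]
        rfl
    _ = TensorProduct.map (eAug εc u)
          (TensorProduct.map (eAug εc u) (deltaPow Δc εc u n))
          ∘ₗ ((TensorProduct.assoc R H H H).toLinearMap ∘ₗ Δc.rTensor H ∘ₗ Δc) := by rw [hco]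
    _ = (TensorProduct.map (eAug εc u)
          (TensorProduct.map (eAug εc u) (deltaPow Δc εc u n))
          ∘ₗ (TensorProduct.assoc R H H H).toLinearMap) ∘ₗ (Δc.rTensor H ∘ₗ Δc) := by
        rw [LinearMap.comp_assoc]
    _ = ((TensorProduct.assoc R H H (Tpow R H n)).toLinearMap
          ∘ₗ TensorProduct.map (TensorProduct.map (eAug εc u) (eAug εc u)) (deltaPow Δc εc u n))
          ∘ₗ (Δc.rTensor H ∘ₗ Δc) := by
        rw [TensorProduct.map_map_comp_assoc_eq]
    _ = (TensorProduct.assoc R H H (Tpow R H n)).toLinearMap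
          ∘ₗ (TensorProduct.map (TensorProduct.map (eAug εc u) (eAug εc u)) (deltaPow Δc εc u n)
            ∘ₗ Δc.rTensor H) ∘ₗ Δc := by
        rw [LinearMap.comp_assoc, LinearMap.comp_assoc]
    _ = (TensorProduct.assoc R H H (Tpow R H n)).toLinearMap
          ∘ₗ (TensorProduct.map ((TensorProduct.map (eAug εc u) (eAug εc u) ∘ₗ Δc))
              (deltaPow Δc εc u n)) ∘ₗ Δc := by
        rw [show Δc.rTensor H = TensorProduct.map Δc LinearMap.id from rfl,
          ← TensorProduct.map_comp]
        rfl
    _ = (TensorProduct.assoc R H H (Tpow R H n)).toLinearMap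
        ∘ₗ LinearMap.rTensor (Tpow R H n)
            (TensorProduct.map (eAug εc u) (eAug εc u) ∘ₗ Δc)
        ∘ₗ deltaPow Δc εc u (n + 1) := by
        have h1 : LinearMap.rTensor (Tpow R H n)
              (TensorProduct.map (eAug εc u) (eAug εc u) ∘ₗ Δc)
              ∘ₗ TensorProduct.map (eAug εc u) (deltaPow Δc εc u n)
            = TensorProduct.map (TensorProduct.map (eAug εc u) (eAug εc u) ∘ₗ Δc)
                (deltaPow Δc εc u n) := by
          rw [show LinearMap.rTensor (Tpow R H n)
              (TensorProduct.map (eAug εc u) (eAug εc u) ∘ₗ Δc)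
            = TensorProduct.map (TensorProduct.map (eAug εc u) (eAug εc u) ∘ₗ Δc)
                LinearMap.id from rfl, ← TensorProduct.map_comp, k3, LinearMap.id_comp]
        rw [deltaPow_succ hco hl n]
        congr 1
        rw [← LinearMap.comp_assoc, h1]

theorem deltaPow_mono
    (hco : (TensorProduct.assoc R H H H).toLinearMap ∘ₗ Δc.rTensor H ∘ₗ Δc = Δc.lTensor H ∘ₗ Δc)
    (hl : εc.lTensor H ∘ₗ Δc = (TensorProduct.mk R H R).flip 1)
    (hεu : εc u = 1) (hΔu : Δc u = u ⊗ₜ[R] u) {p : ℕ} {x : H}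
    (hx : deltaPow Δc εc u (p + 1) x = 0) :
    ∀ s, p + 1 ≤ s → deltaPow Δc εc u s x = 0 := by
  intro s hs
  induction s, hs using Nat.le_induction with
  | base => exact hx
  | succ n hn ih =>
      match n, hn with
      | .succ m, _ =>
        rw [deltaPow_ssucc hco hl hεu hΔu m]
        show (TensorProduct.assoc R H H (Tpow R H m)).toLinearMap
            (LinearMap.rTensor (Tpow R H m) (TensorProduct.map (eAug εc u) (eAug εc u) ∘ₗ Δc)
              (deltaPow Δc εc u (m + 1) x)) = 0
        rw [show @Eq (H ⊗[R] Tpow R H m) (deltaPow Δc εc u (m + 1) x) 0 from ih, map_zero, map_zero]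

theorem deltaPow_eq_mixed_true
    (hco : (TensorProduct.assoc R H H H).toLinearMap ∘ₗ Δc.rTensor H ∘ₗ Δc = Δc.lTensor H ∘ₗ Δc)
    (hl : εc.lTensor H ∘ₗ Δc = (TensorProduct.mk R H R).flip 1) :
    ∀ n, deltaPow Δc εc u n = mixed Δc εc u n (fun _ => true)
  | 0 => rfl
  | n + 1 => by
      rw [deltaPow_succ hco hl n, deltaPow_eq_mixed_true hco hl n]
      rfl

theorem mixed_factor
    (hco : (TensorProduct.assoc R H H H).toLinearMap ∘ₗ Δc.rTensor H ∘ₗ Δc = Δc.lTensor H ∘ₗ Δc)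
    (hl : εc.lTensor H ∘ₗ Δc = (TensorProduct.mk R H R).flip 1)
    (hr : εc.rTensor H ∘ₗ Δc = TensorProduct.mk R R H 1) :
    ∀ (n : ℕ) (f : ℕ → Bool), ∃ T : Tpow R H (cnt n f) →ₗ[R] Tpow R H n,
      mixed Δc εc u n f = T ∘ₗ deltaPow Δc εc u (cnt n f)
  | 0, f => ⟨LinearMap.id, rfl⟩
  | n + 1, f => by
      obtain ⟨T, hT⟩ := mixed_factor hco hl hr n (f ∘ Nat.succ)
      cases hf : f 0 with
      | true =>
          have hc : cnt (n + 1) f = cnt n (f ∘ Nat.succ) + 1 := by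
            show cond (f 0) _ _ = _
            rw [hf]; rfl
          rw [hc]
          refine ⟨TensorProduct.map LinearMap.id T, ?_⟩
          calc @id (H →ₗ[R] H ⊗[R] Tpow R H n) (mixed Δc εc u (n + 1) f)
              = TensorProduct.map (eAug εc u)
                  (T ∘ₗ deltaPow Δc εc u (cnt n (f ∘ Nat.succ))) ∘ₗ Δc := by
                show TensorProduct.map (cond (f 0) _ _) (mixed Δc εc u n (f ∘ Nat.succ)) ∘ₗ Δc = _
                rw [hf, hT]; rfl
            _ = (TensorProduct.map LinearMap.id T
                ∘ₗ TensorProduct.map (eAug εc u)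
                    (deltaPow Δc εc u (cnt n (f ∘ Nat.succ)))) ∘ₗ Δc := by
                rw [← TensorProduct.map_comp, LinearMap.id_comp]
            _ = TensorProduct.map LinearMap.id T
                ∘ₗ deltaPow Δc εc u (cnt n (f ∘ Nat.succ) + 1) := by
                rw [deltaPow_succ hco hl, LinearMap.comp_assoc]
      | false =>
          have hc : cnt (n + 1) f = cnt n (f ∘ Nat.succ) := by
            show cond (f 0) _ _ = _
            rw [hf]; rfl
          rw [hc]
          refine ⟨(TensorProduct.mk R H (Tpow R H n)) u ∘ₗ T, ?_⟩
          calc @id (H →ₗ[R] H ⊗[R] Tpow R H n) (mixed Δc εc u (n + 1) f)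
              = TensorProduct.map (Pu εc u) (mixed Δc εc u n (f ∘ Nat.succ)) ∘ₗ Δc := by
                show TensorProduct.map (cond (f 0) _ _) (mixed Δc εc u n (f ∘ Nat.succ)) ∘ₗ Δc = _
                rw [hf]; rfl
            _ = (TensorProduct.mk R H (Tpow R H n)) u ∘ₗ mixed Δc εc u n (f ∘ Nat.succ) := by
                rw [falsestep hr]
            _ = ((TensorProduct.mk R H (Tpow R H n)) u ∘ₗ T)
                  ∘ₗ deltaPow Δc εc u (cnt n (f ∘ Nat.succ)) := by
                rw [hT, LinearMap.comp_assoc]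

theorem mixed_vanish
    (hco : (TensorProduct.assoc R H H H).toLinearMap ∘ₗ Δc.rTensor H ∘ₗ Δc = Δc.lTensor H ∘ₗ Δc)
    (hl : εc.lTensor H ∘ₗ Δc = (TensorProduct.mk R H R).flip 1)
    (hr : εc.rTensor H ∘ₗ Δc = TensorProduct.mk R R H 1)
    (hεu : εc u = 1) (hΔu : Δc u = u ⊗ₜ[R] u)
    (n : ℕ) (f : ℕ → Bool) (p : ℕ) (x : H)
    (hx : deltaPow Δc εc u (p + 1) x = 0) (hpf : p + 1 ≤ cnt n f) :
    mixed Δc εc u n f x = 0 := by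
  obtain ⟨T, hT⟩ := mixed_factor (u := u) hco hl hr n f
  rw [hT]
  simp [LinearMap.comp_apply, deltaPow_mono hco hl hεu hΔu hx _ hpf]

end Generic


section TensorPart

variable {H₁ H₂ : Type u} [AddCommGroup H₁] [Module R H₁] [AddCommGroup H₂] [Module R H₂]

/-- prepend a boolean to a slot-pattern -/
def consB (b : Bool) (f : ℕ → Bool) : ℕ → Bool
  | 0 => b
  | n + 1 => f n

/-- admissible pairs of patterns -/
def admis : ℕ → List ((ℕ → Bool) × (ℕ → Bool))
  | 0 => [(fun _ => true, fun _ => true)]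
  | m + 1 =>
      (admis m).map (fun fg => (consB true fg.1, consB true fg.2))
        ++ (admis m).map (fun fg => (consB true fg.1, consB false fg.2))
        ++ (admis m).map (fun fg => (consB false fg.1, consB true fg.2))

theorem cnt_consB (b : Bool) (f : ℕ → Bool) (n : ℕ) :
    cnt (n + 1) (consB b f) = cond b (cnt n f + 1) (cnt n f) := rfl

theorem admis_cnt : ∀ m, ∀ fg ∈ admis m, m ≤ cnt m fg.1 + cnt m fg.2
  | 0, fg, _ => Nat.zero_le _
  | m + 1, fg, hfg => by
      simp only [admis, List.mem_append, List.mem_map] at hfg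
      rcases hfg with (⟨a, ha, rfl⟩ | ⟨a, ha, rfl⟩) | ⟨a, ha, rfl⟩ <;>
        have := admis_cnt m a ha <;>
        simp only [cnt_consB, cond_true, cond_false] <;> omega

/-- the interleaving map -/
def sigma : (m : ℕ) →
    ((Tpow R H₁ m : Type u) ⊗[R] (Tpow R H₂ m : Type u) →ₗ[R] Tpow R (H₁ ⊗[R] H₂) m)
  | 0 => (TensorProduct.lid R R).toLinearMap
  | m + 1 =>
      TensorProduct.map LinearMap.id (sigma m)
        ∘ₗ (TensorProduct.tensorTensorTensorComm R H₁ (Tpow R H₁ m) H₂ (Tpow R H₂ m)).toLinearMap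

theorem eAug_tensor (ε₁ : H₁ →ₗ[R] R) (ε₂ : H₂ →ₗ[R] R) (u₁ : H₁) (u₂ : H₂) :
    eAug (tensorCounit ε₁ ε₂) (u₁ ⊗ₜ[R] u₂)
      = TensorProduct.map (eAug ε₁ u₁) (eAug ε₂ u₂)
        + TensorProduct.map (eAug ε₁ u₁) (Pu ε₂ u₂)
        + TensorProduct.map (Pu ε₁ u₁) (eAug ε₂ u₂) := by
  apply TensorProduct.ext'
  intro x y
  simp only [eAug, Pu, tensorCounit, LinearMap.add_apply, TensorProduct.map_tmul,
    LinearMap.sub_apply, LinearMap.id_apply, LinearMap.comp_apply,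
    LinearMap.toSpanSingleton_apply, TensorProduct.map_tmul, LinearEquiv.coe_coe,
    TensorProduct.lid_tmul, TensorProduct.tmul_sub, TensorProduct.sub_tmul,
    TensorProduct.tmul_smul, ← TensorProduct.smul_tmul', smul_smul, smul_eq_mul]
  module

theorem ttc_natural {A B C D A' B' C' D' : Type u}
    [AddCommGroup A] [Module R A] [AddCommGroup B] [Module R B]
    [AddCommGroup C] [Module R C] [AddCommGroup D] [Module R D]
    [AddCommGroup A'] [Module R A'] [AddCommGroup B'] [Module R B']
    [AddCommGroup C'] [Module R C'] [AddCommGroup D'] [Module R D']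
    (a : A →ₗ[R] A') (b : B →ₗ[R] B') (c : C →ₗ[R] C') (d : D →ₗ[R] D') :
    TensorProduct.map (TensorProduct.map a c) (TensorProduct.map b d)
        ∘ₗ (TensorProduct.tensorTensorTensorComm R A B C D).toLinearMap
      = (TensorProduct.tensorTensorTensorComm R A' B' C' D').toLinearMap
        ∘ₗ TensorProduct.map (TensorProduct.map a b) (TensorProduct.map c d) := by
  apply TensorProduct.ext_fourfold'
  intro w x y z
  simp [TensorProduct.tensorTensorTensorComm_tmul]

theorem map_right_listsum {M N P Q : Type u}
    [AddCommGroup M] [Module R M] [AddCommGroup N] [Module R N]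
    [AddCommGroup P] [Module R P] [AddCommGroup Q] [Module R Q]
    {α : Type*} (A : M →ₗ[R] P) (l : List α) (G : α → (N →ₗ[R] Q)) :
    TensorProduct.map A (l.map G).sum = (l.map (fun x => TensorProduct.map A (G x))).sum := by
  induction l with
  | nil => simp [TensorProduct.map_zero_right]
  | cons hd tl ih => simp [TensorProduct.map_add_right, ih]

theorem listsum_comp {M N P : Type u}
    [AddCommGroup M] [Module R M] [AddCommGroup N] [Module R N] [AddCommGroup P] [Module R P]
    {α : Type*} (l : List α) (G : α → (N →ₗ[R] P)) (f : M →ₗ[R] N) :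
    (l.map G).sum ∘ₗ f = (l.map (fun x => G x ∘ₗ f)).sum := by
  induction l with
  | nil => simp
  | cons hd tl ih => simp [LinearMap.add_comp, ih]

theorem comp_listsum {M N P : Type u}
    [AddCommGroup M] [Module R M] [AddCommGroup N] [Module R N] [AddCommGroup P] [Module R P]
    {α : Type*} (l : List α) (G : α → (M →ₗ[R] N)) (f : N →ₗ[R] P) :
    f ∘ₗ (l.map G).sum = (l.map (fun x => f ∘ₗ G x)).sum := by
  induction l with
  | nil => simp
  | cons hd tl ih => simp [LinearMap.comp_add, ih]


theorem mixed_consB (Δc : H₁ →ₗ[R] H₁ ⊗[R] H₁) (εc : H₁ →ₗ[R] R) (u : H₁)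
    (m : ℕ) (b : Bool) (f : ℕ → Bool) :
    mixed Δc εc u (m + 1) (consB b f)
      = TensorProduct.map (cond b (eAug εc u) (Pu εc u)) (mixed Δc εc u m f) ∘ₗ Δc := rfl

theorem piece_eq (Δ₁ : H₁ →ₗ[R] H₁ ⊗[R] H₁) (ε₁ : H₁ →ₗ[R] R) (u₁ : H₁)
    (Δ₂ : H₂ →ₗ[R] H₂ ⊗[R] H₂) (ε₂ : H₂ →ₗ[R] R) (u₂ : H₂) (m : ℕ)
    (c₁ : H₁ →ₗ[R] H₁) (c₂ : H₂ →ₗ[R] H₂) (b₁ b₂ : Bool)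
    (hb₁ : ∀ f, TensorProduct.map c₁ (mixed Δ₁ ε₁ u₁ m f) ∘ₗ Δ₁
      = mixed Δ₁ ε₁ u₁ (m + 1) (consB b₁ f))
    (hb₂ : ∀ g, TensorProduct.map c₂ (mixed Δ₂ ε₂ u₂ m g) ∘ₗ Δ₂
      = mixed Δ₂ ε₂ u₂ (m + 1) (consB b₂ g)) :
    TensorProduct.map (TensorProduct.map c₁ c₂)
        ((sigma m) ∘ₗ ((admis m).map (fun fg =>
          TensorProduct.map (mixed Δ₁ ε₁ u₁ m fg.1) (mixed Δ₂ ε₂ u₂ m fg.2))).sum)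
      ∘ₗ tensorComul Δ₁ Δ₂
    = (sigma (m + 1)) ∘ₗ
        (((admis m).map (fun fg => (consB b₁ fg.1, consB b₂ fg.2))).map (fun fg =>
          TensorProduct.map (mixed Δ₁ ε₁ u₁ (m+1) fg.1) (mixed Δ₂ ε₂ u₂ (m+1) fg.2))).sum := by
  conv_rhs => rw [comp_listsum, List.map_map]
  rw [show TensorProduct.map (TensorProduct.map c₁ c₂)
        ((sigma m) ∘ₗ ((admis m).map (fun fg =>
          TensorProduct.map (mixed Δ₁ ε₁ u₁ m fg.1) (mixed Δ₂ ε₂ u₂ m fg.2))).sum)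
      = TensorProduct.map LinearMap.id (sigma m)
        ∘ₗ TensorProduct.map (TensorProduct.map c₁ c₂) (((admis m).map (fun fg =>
          TensorProduct.map (mixed Δ₁ ε₁ u₁ m fg.1) (mixed Δ₂ ε₂ u₂ m fg.2))).sum) from by
    rw [← TensorProduct.map_comp, LinearMap.id_comp]]
  rw [map_right_listsum, LinearMap.comp_assoc, listsum_comp, comp_listsum]
  apply congrArg
  apply List.map_congr_left
  intro fg _
  show TensorProduct.map LinearMap.id (sigma m)
      ∘ₗ (TensorProduct.map (TensorProduct.map c₁ c₂)
            (TensorProduct.map (mixed Δ₁ ε₁ u₁ m fg.1) (mixed Δ₂ ε₂ u₂ m fg.2))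
          ∘ₗ tensorComul Δ₁ Δ₂)
    = sigma (m + 1) ∘ₗ TensorProduct.map (mixed Δ₁ ε₁ u₁ (m+1) (consB b₁ fg.1))
        (mixed Δ₂ ε₂ u₂ (m+1) (consB b₂ fg.2))
  rw [show tensorComul Δ₁ Δ₂
      = (TensorProduct.tensorTensorTensorComm R H₁ H₁ H₂ H₂).toLinearMap
        ∘ₗ TensorProduct.map Δ₁ Δ₂ from rfl]
  rw [← LinearMap.comp_assoc (TensorProduct.map Δ₁ Δ₂)]
  rw [ttc_natural c₁ (mixed Δ₁ ε₁ u₁ m fg.1) c₂ (mixed Δ₂ ε₂ u₂ m fg.2)]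
  rw [LinearMap.comp_assoc, ← TensorProduct.map_comp, hb₁, hb₂, ← LinearMap.comp_assoc]
  rfl

theorem tensor_mixed (Δ₁ : H₁ →ₗ[R] H₁ ⊗[R] H₁) (ε₁ : H₁ →ₗ[R] R) (u₁ : H₁)
    (Δ₂ : H₂ →ₗ[R] H₂ ⊗[R] H₂) (ε₂ : H₂ →ₗ[R] R) (u₂ : H₂) :
    ∀ m, mixed (tensorComul Δ₁ Δ₂) (tensorCounit ε₁ ε₂) (u₁ ⊗ₜ[R] u₂) m (fun _ => true)
      = sigma m ∘ₗ ((admis m).map (fun fg =>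
          TensorProduct.map (mixed Δ₁ ε₁ u₁ m fg.1) (mixed Δ₂ ε₂ u₂ m fg.2))).sum
  | 0 => by
      show tensorCounit ε₁ ε₂ = _
      simp only [admis, List.map_cons, List.map_nil, List.sum_cons, List.sum_nil, add_zero]
      rfl
  | m + 1 => by
      have IH := tensor_mixed Δ₁ ε₁ u₁ Δ₂ ε₂ u₂ m
      have unfold1 : mixed (tensorComul Δ₁ Δ₂) (tensorCounit ε₁ ε₂) (u₁ ⊗ₜ[R] u₂) (m + 1)
            (fun _ => true)
          = TensorProduct.map (eAug (tensorCounit ε₁ ε₂) (u₁ ⊗ₜ[R] u₂))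
              (mixed (tensorComul Δ₁ Δ₂) (tensorCounit ε₁ ε₂) (u₁ ⊗ₜ[R] u₂) m (fun _ => true))
            ∘ₗ tensorComul Δ₁ Δ₂ := rfl
      rw [unfold1, IH, eAug_tensor, TensorProduct.map_add_left, TensorProduct.map_add_left,
        LinearMap.add_comp, LinearMap.add_comp]
      rw [piece_eq Δ₁ ε₁ u₁ Δ₂ ε₂ u₂ m (eAug ε₁ u₁) (eAug ε₂ u₂) true true
          (fun _ => rfl) (fun _ => rfl),
        piece_eq Δ₁ ε₁ u₁ Δ₂ ε₂ u₂ m (eAug ε₁ u₁) (Pu ε₂ u₂) true false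
          (fun _ => rfl) (fun _ => rfl),
        piece_eq Δ₁ ε₁ u₁ Δ₂ ε₂ u₂ m (Pu ε₁ u₁) (eAug ε₂ u₂) false true
          (fun _ => rfl) (fun _ => rfl)]
      rw [show admis (m + 1)
          = (admis m).map (fun fg => (consB true fg.1, consB true fg.2))
            ++ (admis m).map (fun fg => (consB true fg.1, consB false fg.2))
            ++ (admis m).map (fun fg => (consB false fg.1, consB true fg.2)) from rfl]
      rw [List.map_append, List.map_append, List.sum_append, List.sum_append,
        LinearMap.comp_add, LinearMap.comp_add]
      rfl

end TensorPart

theorem listsum_apply {M N : Type u}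
    [AddCommGroup M] [Module R M] [AddCommGroup N] [Module R N]
    {α : Type*} (l : List α) (G : α → (M →ₗ[R] N)) (w : M) :
    (l.map G).sum w = (l.map (fun x => G x w)).sum := by
  induction l with
  | nil => simp
  | cons hd tl ih => simp [ih]


/-- If `H₁`, `H₂` are conilpotent coaugmented coalgebras, then so is `H₁ ⊗ H₂`. -/
theorem stmt3 {R : Type u} [CommRing R]
    {H₁ H₂ : Type u} [AddCommGroup H₁] [Module R H₁] [AddCommGroup H₂] [Module R H₂]
    [Coalgebra R H₁] [Coalgebra R H₂] (u₁ : H₁) (u₂ : H₂)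
    (hεu₁ : Coalgebra.counit (R := R) (A := H₁) u₁ = 1)
    (hΔu₁ : Coalgebra.comul (R := R) (A := H₁) u₁ = u₁ ⊗ₜ[R] u₁)
    (hεu₂ : Coalgebra.counit (R := R) (A := H₂) u₂ = 1)
    (hΔu₂ : Coalgebra.comul (R := R) (A := H₂) u₂ = u₂ ⊗ₜ[R] u₂)
    (h₁ : ∀ x : H₁, ∃ n : ℕ, x ∈ corad (Coalgebra.comul (R := R) (A := H₁))
      (Coalgebra.counit (R := R) (A := H₁)) u₁ n)
    (h₂ : ∀ y : H₂, ∃ n : ℕ, y ∈ corad (Coalgebra.comul (R := R) (A := H₂))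
      (Coalgebra.counit (R := R) (A := H₂)) u₂ n) :
    ∀ z : H₁ ⊗[R] H₂, ∃ n : ℕ, z ∈ corad
      (tensorComul (Coalgebra.comul (R := R) (A := H₁)) (Coalgebra.comul (R := R) (A := H₂)))
      (tensorCounit (Coalgebra.counit (R := R) (A := H₁)) (Coalgebra.counit (R := R) (A := H₂)))
      (u₁ ⊗ₜ[R] u₂) n := by
  have hco₁ := Coalgebra.coassoc (R := R) (A := H₁)
  have hl₁ := Coalgebra.lTensor_counit_comp_comul (R := R) (A := H₁)
  have hr₁ := Coalgebra.rTensor_counit_comp_comul (R := R) (A := H₁)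
  have hco₂ := Coalgebra.coassoc (R := R) (A := H₂)
  have hl₂ := Coalgebra.lTensor_counit_comp_comul (R := R) (A := H₂)
  have hr₂ := Coalgebra.rTensor_counit_comp_comul (R := R) (A := H₂)
  have hct : tensorCounit (Coalgebra.counit (R := R) (A := H₁))
        (Coalgebra.counit (R := R) (A := H₂))
      = Coalgebra.counit (R := R) (A := H₁ ⊗[R] H₂) := by
    apply TensorProduct.ext'
    intro x y
    simp [tensorCounit, smul_eq_mul, mul_comm]
  have hcm : tensorComul (Coalgebra.comul (R := R) (A := H₁))
        (Coalgebra.comul (R := R) (A := H₂))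
      = Coalgebra.comul (R := R) (A := H₁ ⊗[R] H₂) := rfl
  have hco_t : (TensorProduct.assoc R (H₁ ⊗[R] H₂) (H₁ ⊗[R] H₂) (H₁ ⊗[R] H₂)).toLinearMap
        ∘ₗ (tensorComul (Coalgebra.comul (R := R) (A := H₁))
            (Coalgebra.comul (R := R) (A := H₂))).rTensor (H₁ ⊗[R] H₂)
        ∘ₗ tensorComul (Coalgebra.comul (R := R) (A := H₁))
            (Coalgebra.comul (R := R) (A := H₂))
      = (tensorComul (Coalgebra.comul (R := R) (A := H₁))
            (Coalgebra.comul (R := R) (A := H₂))).lTensor (H₁ ⊗[R] H₂)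
        ∘ₗ tensorComul (Coalgebra.comul (R := R) (A := H₁))
            (Coalgebra.comul (R := R) (A := H₂)) := by
    rw [hcm]; exact Coalgebra.coassoc
  have hl_t : (tensorCounit (Coalgebra.counit (R := R) (A := H₁))
          (Coalgebra.counit (R := R) (A := H₂))).lTensor (H₁ ⊗[R] H₂)
        ∘ₗ tensorComul (Coalgebra.comul (R := R) (A := H₁))
            (Coalgebra.comul (R := R) (A := H₂))
      = (TensorProduct.mk R (H₁ ⊗[R] H₂) R).flip 1 := by
    rw [hct, hcm]; exact Coalgebra.lTensor_counit_comp_comul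
  have hr_t : (tensorCounit (Coalgebra.counit (R := R) (A := H₁))
          (Coalgebra.counit (R := R) (A := H₂))).rTensor (H₁ ⊗[R] H₂)
        ∘ₗ tensorComul (Coalgebra.comul (R := R) (A := H₁))
            (Coalgebra.comul (R := R) (A := H₂))
      = TensorProduct.mk R R (H₁ ⊗[R] H₂) 1 := by
    rw [hct, hcm]; exact Coalgebra.rTensor_counit_comp_comul
  have hεu_t : tensorCounit (Coalgebra.counit (R := R) (A := H₁))
        (Coalgebra.counit (R := R) (A := H₂)) (u₁ ⊗ₜ[R] u₂) = 1 := by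
    simp [tensorCounit, hεu₁, hεu₂]
  have hΔu_t : tensorComul (Coalgebra.comul (R := R) (A := H₁))
        (Coalgebra.comul (R := R) (A := H₂)) (u₁ ⊗ₜ[R] u₂)
      = (u₁ ⊗ₜ[R] u₂) ⊗ₜ[R] (u₁ ⊗ₜ[R] u₂) := by
    simp [tensorComul, hΔu₁, hΔu₂, TensorProduct.tensorTensorTensorComm_tmul]
  have key : ∀ (x : H₁) (y : H₂) (p q : ℕ),
      deltaPow (Coalgebra.comul (R := R) (A := H₁)) (Coalgebra.counit (R := R) (A := H₁))
        u₁ (p + 1) x = 0 →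
      deltaPow (Coalgebra.comul (R := R) (A := H₂)) (Coalgebra.counit (R := R) (A := H₂))
        u₂ (q + 1) y = 0 →
      deltaPow (tensorComul Coalgebra.comul Coalgebra.comul)
        (tensorCounit Coalgebra.counit Coalgebra.counit) (u₁ ⊗ₜ[R] u₂)
        (p + q + 2) (x ⊗ₜ[R] y) = 0 := by
    intro x y p q hx hy
    rw [deltaPow_eq_mixed_true hco_t hl_t (p + q + 2),
      tensor_mixed Coalgebra.comul Coalgebra.counit u₁ Coalgebra.comul Coalgebra.counit u₂
        (p + q + 2), LinearMap.comp_apply]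
    have hz : (((admis (p + q + 2)).map (fun fg =>
        TensorProduct.map (mixed Coalgebra.comul Coalgebra.counit u₁ (p + q + 2) fg.1)
          (mixed Coalgebra.comul Coalgebra.counit u₂ (p + q + 2) fg.2))).sum) (x ⊗ₜ[R] y)
        = 0 := by
      rw [listsum_apply]
      apply List.sum_eq_zero
      intro t ht
      simp only [List.map_map, List.mem_map, Function.comp_apply] at ht
      obtain ⟨fg, hfg, rfl⟩ := ht
      have hcnt := admis_cnt (p + q + 2) fg hfg
      rw [TensorProduct.map_tmul]
      rcases (by omega : p + 1 ≤ cnt (p + q + 2) fg.1 ∨ q + 1 ≤ cnt (p + q + 2) fg.2) with h | h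
      · rw [mixed_vanish hco₁ hl₁ hr₁ hεu₁ hΔu₁ _ _ p x hx h, TensorProduct.zero_tmul]
      · rw [mixed_vanish hco₂ hl₂ hr₂ hεu₂ hΔu₂ _ _ q y hy h, TensorProduct.tmul_zero]
    rw [hz, map_zero]
  have mono_t : ∀ (w : H₁ ⊗[R] H₂) (n m : ℕ), n ≤ m →
      w ∈ corad (tensorComul Coalgebra.comul Coalgebra.comul)
        (tensorCounit Coalgebra.counit Coalgebra.counit) (u₁ ⊗ₜ[R] u₂) n →
      w ∈ corad (tensorComul Coalgebra.comul Coalgebra.comul)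
        (tensorCounit Coalgebra.counit Coalgebra.counit) (u₁ ⊗ₜ[R] u₂) m := by
    intro w n m hnm hw
    simp only [corad, LinearMap.mem_ker] at hw ⊢
    exact deltaPow_mono hco_t hl_t hεu_t hΔu_t hw (m + 1) (by omega)
  intro z
  induction z using TensorProduct.induction_on with
  | zero => exact ⟨0, Submodule.zero_mem _⟩
  | tmul x y =>
      obtain ⟨p, hp⟩ := h₁ x
      obtain ⟨q, hq⟩ := h₂ y
      refine ⟨p + q + 1, ?_⟩
      simp only [corad, LinearMap.mem_ker] at hp hq ⊢
      exact key x y p q hp hq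
  | add z₁ z₂ ih₁ ih₂ =>
      obtain ⟨n₁, hn₁⟩ := ih₁
      obtain ⟨n₂, hn₂⟩ := ih₂
      exact ⟨max n₁ n₂, Submodule.add_mem _
        (mono_t _ _ _ (le_max_left _ _) hn₁) (mono_t _ _ _ (le_max_right _ _) hn₂)⟩
end
end

section
/- Let k be a field, H a bialgebra over k, n ≥ 1, and a_1, …, a_n ∈ Prim(H) primitive elements. Then δ^n(a_1 a_2 ⋯ a_n) = Σ_{σ ∈ S_n} a_{σ(1)} ⊗ a_{σ(2)} ⊗ ⋯ ⊗ a_{σ(n)}, the sum over all permutations σ of {1,…,n}. -/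
open TensorProduct

noncomputable section

universe u

variable (R : Type u) [CommRing R]

variable {R}
variable {H : Type u} [AddCommGroup H] [Module R H]

/-- The elementary tensor `v 0 ⊗ v 1 ⊗ ⋯ ⊗ v (n-1) ∈ H^{⊗n}`. -/
def mkTensor {R : Type u} [CommRing R] {H : Type u} [AddCommGroup H] [Module R H] :
    (n : ℕ) → (Fin n → H) → Tpow R H n
  | 0, _ => (1 : R)
  | n + 1, v => v 0 ⊗ₜ[R] mkTensor n (fun i => v i.succ)

section CoalgLemmas
variable [Coalgebra R H]

local notation "Δ" => (Coalgebra.comul (R := R) (A := H))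
local notation "ε" => (Coalgebra.counit (R := R) (A := H))


lemma iterComul_succ_s9 (n : ℕ) :
    iterComul Δ ε (n + 1)
      = (LinearMap.lTensor H (iterComul Δ ε n)) ∘ₗ Δ := by
  induction n with
  | zero =>
    have h0 : iterComul Δ ε 0 = ε := rfl
    rw [h0]
    ext x
    show (TensorProduct.rid R H).symm x = (LinearMap.lTensor H ε ∘ₗ Δ) x
    rw [Coalgebra.lTensor_counit_comp_comul]
    rfl
  | succ n ih =>
    set f := iterComul Δ ε n with hf
    show (TensorProduct.assoc R H H (Tpow R H n)).toLinearMap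
        ∘ₗ (LinearMap.rTensor (Tpow R H n) Δ) ∘ₗ (iterComul Δ ε (n + 1)) = _
    rw [ih]
    have h1 : (LinearMap.rTensor (↑(Tpow R H n)) Δ) ∘ₗ ((LinearMap.lTensor H f) ∘ₗ Δ)
        = (LinearMap.lTensor (H ⊗[R] H) f) ∘ₗ ((LinearMap.rTensor H Δ) ∘ₗ Δ) := by
      rw [← LinearMap.comp_assoc, LinearMap.rTensor_comp_lTensor,
        ← LinearMap.lTensor_comp_rTensor, LinearMap.comp_assoc]
    rw [h1]
    have hl : LinearMap.lTensor (H ⊗[R] H) f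
        = TensorProduct.map (TensorProduct.map (LinearMap.id) (LinearMap.id)) f := by
      rw [TensorProduct.map_id]; rfl
    have h3 : (TensorProduct.assoc R H H (Tpow R H n)).toLinearMap
          ∘ₗ (TensorProduct.map (TensorProduct.map (LinearMap.id (M := H)) (LinearMap.id (M := H))) f)
        = (TensorProduct.map LinearMap.id (TensorProduct.map LinearMap.id f))
          ∘ₗ (TensorProduct.assoc R H H H).toLinearMap :=
      (TensorProduct.map_map_comp_assoc_eq _ _ _).symm
    have h4 : TensorProduct.map (LinearMap.id (M := H)) (TensorProduct.map (LinearMap.id (M := H)) f)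
        = LinearMap.lTensor H (LinearMap.lTensor H f) := rfl
    simp only [← LinearMap.comp_assoc]
    rw [hl, h3, h4]
    simp only [LinearMap.comp_assoc]
    rw [Coalgebra.coassoc]
    rw [← LinearMap.comp_assoc, ← LinearMap.lTensor_comp]
    rfl

lemma deltaPow_succ_s9 (u : H) (n : ℕ) :
    deltaPow Δ ε u (n + 1)
      = (TensorProduct.map (eAug ε u) (deltaPow Δ ε u n)) ∘ₗ Δ := by
  show (TensorProduct.map (eAug ε u) (mapPow (eAug ε u) n)) ∘ₗ (iterComul Δ ε (n+1)) = _
  rw [iterComul_succ_s9, ← LinearMap.comp_assoc]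
  congr 1
  rw [LinearMap.lTensor, ← TensorProduct.map_comp, LinearMap.comp_id]
  rfl

end CoalgLemmas

-- generic lemmas

lemma prod_ofFn_ite_single {H : Type u} [Monoid H] :
    ∀ (m : ℕ) (f : Fin m → H) (p : Fin m),
      (List.ofFn fun i => if i = p then f i else 1).prod = f p := by
  intro m
  induction m with
  | zero => exact fun f p => p.elim0
  | succ m ih =>
    intro f p
    rw [List.ofFn_succ, List.prod_cons]
    refine Fin.cases ?_ ?_ p
    · simp [Fin.succ_ne_zero]
    · intro j
      have h0 : ((0 : Fin (m+1)) = j.succ) = False := by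
        simp [(Fin.succ_ne_zero j).symm]
      simp only [h0, if_false, one_mul]
      have : (fun i : Fin m => if i.succ = j.succ then f i.succ else 1)
          = fun i : Fin m => if i = j then (fun i : Fin m => f i.succ) i else 1 := by
        funext i; simp [Fin.succ_inj]
      rw [this, ih (fun i => f i.succ) j]

lemma exists_perm_comp {r m : ℕ} (f g : Fin r → Fin m)
    (hf : Function.Injective f) (hg : Function.Injective g)
    (hrange : ∀ x, (∃ i, f i = x) ↔ (∃ i, g i = x)) :
    ∃ e : Equiv.Perm (Fin r), ∀ i, f (e i) = g i := by
  have h : ∀ i : Fin r, ∃ j, f j = g i := fun i => (hrange (g i)).mpr ⟨i, rfl⟩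
  choose u hu using h
  have hui : Function.Injective u := by
    intro i j hij
    apply hg
    rw [← hu i, ← hu j, hij]
  exact ⟨Equiv.ofBijective u ((Finite.injective_iff_bijective).mp hui),
    fun i => hu i⟩

lemma sum_perm_comp {β : Type*} {M : Type*} [AddCommMonoid M] {r : ℕ} (f g : Fin r → β)
    (e : Equiv.Perm (Fin r)) (h : ∀ i, f (e i) = g i) (F : (Fin r → β) → M) :
    ∑ τ : Equiv.Perm (Fin r), F (fun i => f (τ i))
      = ∑ τ : Equiv.Perm (Fin r), F (fun i => g (τ i)) := by
  refine (Fintype.sum_bijective (fun τ => e * τ) (Equiv.mulLeft e).bijective _ _ ?_).symm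
  intro τ
  congr 1
  funext i
  exact (h (τ i)).symm

lemma reduce {H : Type u} [Monoid H] :
    ∀ (m : ℕ) (s : Fin m → Bool),
    ∃ (r : ℕ) (g : Fin r → Fin m), Function.Injective g ∧ (∀ i, s (g i) = false) ∧
      (∀ j, s j = false → ∃ i, g i = j) ∧
      (r + (Finset.univ.filter fun i => s i = true).card = m) ∧
      ∀ (a : Fin m → H), (List.ofFn fun i => if s i then 1 else a i).prod
        = (List.ofFn (a ∘ g)).prod := by
  intro m
  induction m with
  | zero =>
    intro s
    exact ⟨0, Fin.elim0, fun i => i.elim0, fun i => i.elim0, fun j => j.elim0,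
      by simp, fun a => by simp⟩
  | succ m ih =>
    intro s
    obtain ⟨r, g', hinj, hfalse, hsurj, hcard, hprod⟩ := ih (fun i => s i.succ)
    have hcards : (Finset.univ.filter fun i : Fin (m+1) => s i = true).card
        = (if s 0 = true then 1 else 0)
          + (Finset.univ.filter fun i : Fin m => s i.succ = true).card := by
      rw [Finset.card_filter, Finset.card_filter, Fin.sum_univ_succ]
    by_cases h0 : s 0 = true
    · refine ⟨r, Fin.succ ∘ g', fun i j hij => hinj (Fin.succ_injective _ hij),
        fun i => hfalse i, ?_, ?_, ?_⟩
      · intro j hj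
        refine Fin.cases ?_ ?_ j hj
        · intro hj0; rw [h0] at hj0; exact absurd hj0 (by simp)
        · intro j' hj'
          obtain ⟨i, hi⟩ := hsurj j' hj'
          exact ⟨i, by simp [Function.comp, hi]⟩
      · rw [hcards, if_pos h0]; omega
      · intro a
        rw [List.ofFn_succ, List.prod_cons, if_pos h0, one_mul, hprod (fun i => a i.succ)]
        rfl
    · have h0' : s 0 = false := by simpa using h0
      refine ⟨r + 1, Fin.cons 0 (Fin.succ ∘ g'), ?_, ?_, ?_, ?_, ?_⟩
      · apply Fin.cons_injective_of_injective
        · rintro ⟨i, hi⟩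
          exact Fin.succ_ne_zero _ (hi.symm ▸ rfl : (Fin.succ ∘ g') i = 0)
        · exact fun i j hij => hinj (Fin.succ_injective _ hij)
      · intro i
        refine Fin.cases ?_ ?_ i
        · rw [Fin.cons_zero]; exact h0'
        · intro i'; rw [Fin.cons_succ]; exact hfalse i'
      · intro j hj
        refine Fin.cases ?_ ?_ j hj
        · intro _; exact ⟨0, rfl⟩
        · intro j' hj'
          obtain ⟨i, hi⟩ := hsurj j' hj'
          exact ⟨i.succ, by rw [Fin.cons_succ]; simp [Function.comp, hi]⟩
      · rw [hcards, if_neg h0]; omega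
      · intro a
        rw [List.ofFn_succ, List.prod_cons, if_neg h0, hprod (fun i => a i.succ)]
        rw [List.ofFn_succ (f := a ∘ Fin.cons 0 (Fin.succ ∘ g'))]
        rw [List.prod_cons]
        have e1 : (a ∘ Fin.cons 0 (Fin.succ ∘ g')) 0 = a 0 := by
          simp
        have e2 : (fun i : Fin r => (a ∘ Fin.cons 0 (Fin.succ ∘ g')) i.succ)
            = ((fun i => a i.succ) ∘ g') := by
          funext i
          simp
        rw [e1, e2]

section BialgLemmas


variable {k : Type u} [CommRing k] {H : Type u} [Ring H] [Bialgebra k H]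

local notation "Δ" => (Coalgebra.comul (R := k) (A := H))
local notation "ε" => (Coalgebra.counit (R := k) (A := H))

lemma ofFn_tmul_prod (m : ℕ) (f g : Fin m → H) :
    (List.ofFn fun i => ((f i) ⊗ₜ[k] (g i) : H ⊗[k] H)).prod
      = ((List.ofFn f).prod ⊗ₜ[k] (List.ofFn g).prod : H ⊗[k] H) := by
  induction m with
  | zero => simp [Algebra.TensorProduct.one_def]
  | succ m ih =>
    simp only [List.ofFn_succ, List.prod_cons, ih,
      Algebra.TensorProduct.tmul_mul_tmul]

lemma comul_ofFn_prod (m : ℕ) (a : Fin m → H)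
    (hp : ∀ i, Δ (a i) = a i ⊗ₜ[k] 1 + 1 ⊗ₜ[k] a i) :
    Δ ((List.ofFn a).prod)
      = ∑ s : Fin m → Bool,
          ((List.ofFn fun i => if s i then a i else 1).prod
            ⊗ₜ[k] (List.ofFn fun i => if s i then 1 else a i).prod) := by
  induction m with
  | zero =>
    simp [Algebra.TensorProduct.one_def]
  | succ m ih =>
    rw [List.ofFn_succ, List.prod_cons, Bialgebra.comul_mul,
      ih (fun i => a i.succ) (fun i => hp i.succ), hp 0]
    rw [← Fintype.sum_equiv (Fin.consEquiv (fun _ : Fin (m+1) => Bool))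
      (fun p => ((if p.1 then a 0 else 1) * (List.ofFn fun i => if p.2 i then a i.succ else 1).prod)
            ⊗ₜ[k] ((if p.1 then 1 else a 0) * (List.ofFn fun i => if p.2 i then 1 else a i.succ).prod))
      (fun s => ((List.ofFn fun i => if s i then a i else 1).prod
            ⊗ₜ[k] (List.ofFn fun i => if s i then 1 else a i).prod))
      (fun p => by
        simp only [Fin.consEquiv_apply, List.ofFn_succ, List.prod_cons,
          Fin.cons_zero, Fin.cons_succ])]
    rw [Fintype.sum_prod_type, Fintype.sum_bool]
    simp only [if_true, if_false, Bool.false_eq_true, add_mul, Finset.mul_sum]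
    rw [← Finset.sum_add_distrib]
    apply Finset.sum_congr rfl
    intro s _
    simp [Algebra.TensorProduct.tmul_mul_tmul]



lemma eAug_one' : eAug (R := k) ε (1 : H) 1 = 0 := by
  simp [eAug, LinearMap.sub_apply, LinearMap.toSpanSingleton_apply, Bialgebra.counit_one]

lemma eAug_primitive (x : H) (h : ε x = 0) : eAug (R := k) ε (1 : H) x = x := by
  simp [eAug, LinearMap.sub_apply, LinearMap.toSpanSingleton_apply, h]

lemma counit_ofFn_ite_zero (m : ℕ) (a : Fin m → H) (s : Fin m → Bool)
    (hε : ∀ i, ε (a i) = 0) (j : Fin m) (hj : s j = true) :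
    ε ((List.ofFn fun i => if s i then a i else 1).prod) = 0 := by
  have h1 : ε ((List.ofFn fun i => if s i then a i else 1).prod)
      = (List.map (Bialgebra.counitAlgHom k H) (List.ofFn fun i => if s i then a i else 1)).prod :=
    (map_list_prod (Bialgebra.counitAlgHom k H) _)
  rw [h1, List.map_ofFn]
  apply List.prod_eq_zero
  rw [List.mem_ofFn]
  refine ⟨j, ?_⟩
  show ε (if s j = true then a j else 1) = 0
  rw [if_pos hj, hε j]

lemma deltaPow_succ_apply (u : H) (n : ℕ) (x : H) :
    deltaPow Δ ε u (n + 1) x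
      = TensorProduct.map (eAug ε u) (deltaPow Δ ε u n) (Δ x) :=
  LinearMap.congr_fun (deltaPow_succ_s9 u n) x

lemma deltaPow_one (u : H) (x : H) :
    deltaPow Δ ε u 1 x = (eAug ε u x) ⊗ₜ[k] (1 : k) := by
  show (TensorProduct.map (eAug ε u) (mapPow (eAug ε u) 0))
    ((TensorProduct.rid k H).symm x) = _
  rw [TensorProduct.rid_symm_apply]
  exact TensorProduct.map_tmul (eAug ε u) (mapPow (eAug ε u) 0) x (1 : k)

theorem key (n : ℕ) :
    (∀ (m : ℕ) (a : Fin m → H),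
        (∀ i, ε (a i) = 0 ∧ Δ (a i) = a i ⊗ₜ[k] 1 + 1 ⊗ₜ[k] a i) → m ≤ n →
        deltaPow Δ ε (1 : H) (n + 1) ((List.ofFn a).prod) = 0) ∧
    (∀ (a : Fin (n + 1) → H),
        (∀ i, ε (a i) = 0 ∧ Δ (a i) = a i ⊗ₜ[k] 1 + 1 ⊗ₜ[k] a i) →
        deltaPow Δ ε (1 : H) (n + 1) ((List.ofFn a).prod)
          = ∑ σ : Equiv.Perm (Fin (n + 1)), mkTensor (n + 1) (fun i => a (σ i))) := by
  induction n with
  | zero =>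
    constructor
    · intro m a hp hm
      have hm0 : m = 0 := Nat.le_zero.mp hm
      subst hm0
      rw [List.ofFn_zero, List.prod_nil, deltaPow_one, eAug_one', TensorProduct.zero_tmul]
      rfl
    · intro a hp
      have h1 : (List.ofFn a).prod = a 0 := by
        rw [List.ofFn_succ, List.ofFn_zero, List.prod_cons, List.prod_nil, mul_one]
      rw [h1, deltaPow_one, eAug_primitive _ (hp 0).1,
        Fintype.sum_subsingleton _ (1 : Equiv.Perm (Fin 1))]
      rfl
  | succ n ih =>
    classical
    have hcore : ∀ (m : ℕ) (a : Fin m → H),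
        (∀ i, ε (a i) = 0 ∧ Δ (a i) = a i ⊗ₜ[k] 1 + 1 ⊗ₜ[k] a i) →
        deltaPow Δ ε (1 : H) (n + 2) ((List.ofFn a).prod)
          = ∑ s : Fin m → Bool,
              (eAug ε (1 : H) ((List.ofFn fun i => if s i then a i else 1).prod))
                ⊗ₜ[k] (deltaPow Δ ε (1 : H) (n + 1)
                  ((List.ofFn fun i => if s i then 1 else a i).prod)) := by
      intro m a hp
      rw [deltaPow_succ_apply (1 : H) (n + 1),
        comul_ofFn_prod m a (fun i => (hp i).2), map_sum]
      simp only [TensorProduct.map_tmul]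
      rfl
    have hvan : ∀ (m : ℕ) (a : Fin m → H),
        (∀ i, ε (a i) = 0 ∧ Δ (a i) = a i ⊗ₜ[k] 1 + 1 ⊗ₜ[k] a i) → m ≤ n + 1 →
        deltaPow Δ ε (1 : H) (n + 2) ((List.ofFn a).prod) = 0 := by
      intro m a hp hm
      rw [hcore m a hp]
      apply Finset.sum_eq_zero
      intro s _
      by_cases hall : ∀ i, s i = false
      · have h1 : (List.ofFn fun i => if s i then a i else 1).prod = 1 := by
          apply List.prod_eq_one
          intro x hx
          rw [List.mem_ofFn] at hx
          obtain ⟨i, rfl⟩ := hx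
          simp [hall i]
        rw [h1, eAug_one', TensorProduct.zero_tmul]
        rfl
      · push_neg at hall
        obtain ⟨j, hj⟩ := hall
        have hj' : s j = true := by simpa using hj
        obtain ⟨r, g, hginj, hgfalse, hgsurj, hgcard, hgprod⟩ := reduce (H := H) m s
        have hr : r ≤ n := by
          have hcpos : 0 < (Finset.univ.filter fun i => s i = true).card :=
            Finset.card_pos.mpr ⟨j, by simp [hj']⟩
          omega
        rw [hgprod a, ih.1 r (a ∘ g) (fun i => hp (g i)) hr, TensorProduct.tmul_zero]
        rfl
    refine ⟨hvan, ?_⟩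
    intro a hp
    rw [hcore _ a hp]
    have hzero : ∀ s : Fin (n + 2) → Bool, (¬ ∃ p, (fun i => decide (i = p)) = s) →
        (eAug ε (1 : H) ((List.ofFn fun i => if s i then a i else 1).prod))
          ⊗ₜ[k] (deltaPow Δ ε (1 : H) (n + 1)
            ((List.ofFn fun i => if s i then 1 else a i).prod)) = 0 := by
      intro s hs
      by_cases hall : ∀ i, s i = false
      · have h1 : (List.ofFn fun i => if s i then a i else 1).prod = 1 := by
          apply List.prod_eq_one
          intro x hx
          rw [List.mem_ofFn] at hx
          obtain ⟨i, rfl⟩ := hx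
          simp [hall i]
        rw [h1, eAug_one', TensorProduct.zero_tmul]
      · push_neg at hall
        obtain ⟨j, hj⟩ := hall
        have hj' : s j = true := by simpa using hj
        by_cases h2 : ∃ j', j' ≠ j ∧ s j' = true
        · obtain ⟨j', hj'ne, hj''⟩ := h2
          obtain ⟨r, g, hginj, hgfalse, hgsurj, hgcard, hgprod⟩ := reduce (H := H) (n + 2) s
          have hc2 : 2 ≤ (Finset.univ.filter fun i => s i = true).card := by
            apply Finset.one_lt_card.mpr
            exact ⟨j, by simp [hj'], j', by simp [hj''], fun h => hj'ne h.symm⟩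
          have hr : r ≤ n := by omega
          rw [hgprod a, ih.1 r (a ∘ g) (fun i => hp (g i)) hr, TensorProduct.tmul_zero]
        · exfalso
          apply hs
          refine ⟨j, ?_⟩
          funext i
          by_cases hij : i = j
          · subst hij; simp [hj']
          · push_neg at h2
            have := h2 i
            simp [hij]
            by_contra hsi
            exact absurd (by simpa using hsi : s i = true) (by simp [this hij])
    rw [← Finset.sum_filter_add_sum_filter_not Finset.univ
      (fun s : Fin (n + 2) → Bool => ∃ p, (fun i => decide (i = p)) = s)]
    have hz : (∑ s ∈ Finset.univ.filter
        (fun s : Fin (n + 2) → Bool => ¬ ∃ p, (fun i => decide (i = p)) = s),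
        (eAug ε (1 : H) ((List.ofFn fun i => if s i then a i else 1).prod))
          ⊗ₜ[k] (deltaPow Δ ε (1 : H) (n + 1)
            ((List.ofFn fun i => if s i then 1 else a i).prod))) = 0 := by
      apply Finset.sum_eq_zero
      intro s hs
      exact hzero s (Finset.mem_filter.mp hs).2
    rw [hz, add_zero]
    have himg : Finset.univ.filter
        (fun s : Fin (n + 2) → Bool => ∃ p, (fun i => decide (i = p)) = s)
        = Finset.image (fun (p : Fin (n + 2)) (i : Fin (n + 2)) => decide (i = p))
            Finset.univ := by
      ext s
      simp only [Finset.mem_filter, Finset.mem_univ, true_and, Finset.mem_image]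
    rw [himg, Finset.sum_image (by
      intro p _ q _ h
      have := congrFun h p
      simpa using this)]
    have hTp : ∀ p : Fin (n + 2),
        (eAug ε (1 : H) ((List.ofFn fun i => if decide (i = p) then a i else 1).prod))
          ⊗ₜ[k] (deltaPow Δ ε (1 : H) (n + 1)
            ((List.ofFn fun i => if decide (i = p) then 1 else a i).prod))
        = a p ⊗ₜ[k] ∑ τ : Equiv.Perm (Fin (n + 1)),
            mkTensor (n + 1) (fun i => a ((Equiv.swap (0 : Fin (n + 2)) p) (τ i).succ)) := by
      intro p
      have hP : (List.ofFn fun i : Fin (n + 2) => if decide (i = p) then a i else 1).prod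
          = a p := by
        have heq : (fun i : Fin (n + 2) => if decide (i = p) then a i else 1)
            = fun i => if i = p then a i else 1 := by
          funext i; simp [decide_eq_true_eq]
        rw [heq, prod_ofFn_ite_single]
      obtain ⟨r, g, hginj, hgfalse, hgsurj, hgcard, hgprod⟩ :=
        reduce (H := H) (n + 2) (fun i => decide (i = p))
      have hcard1 : (Finset.univ.filter
          fun i : Fin (n + 2) => decide (i = p) = true).card = 1 := by
        have hsing : (Finset.univ.filter fun i : Fin (n + 2) => decide (i = p) = true)
            = {p} := by
          ext i; simp
        rw [hsing, Finset.card_singleton]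
      have hrn : r = n + 1 := by omega
      subst hrn
      rw [hgprod a, ih.2 (a ∘ g) (fun i => hp (g i))]
      have hne : ∀ i : Fin (n + 1), g i ≠ p := by
        intro i h
        have h2 := hgfalse i
        rw [h] at h2
        simp at h2
      have hφinj : Function.Injective
          (fun i : Fin (n + 1) => (Equiv.swap (0 : Fin (n + 2)) p) i.succ) :=
        fun i j h => Fin.succ_injective _ ((Equiv.swap (0 : Fin (n + 2)) p).injective h)
      have hrange : ∀ x, (∃ i : Fin (n + 1), (Equiv.swap (0 : Fin (n + 2)) p) i.succ = x)
          ↔ (∃ i, g i = x) := by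
        intro x
        constructor
        · rintro ⟨i, rfl⟩
          apply hgsurj
          have hne0 : (Equiv.swap (0 : Fin (n + 2)) p) i.succ ≠ p := by
            intro h
            have h2 : i.succ = (0 : Fin (n + 2)) :=
              (Equiv.swap (0 : Fin (n + 2)) p).injective
                (h.trans (Equiv.swap_apply_left (0 : Fin (n + 2)) p).symm)
            exact Fin.succ_ne_zero i h2
          simp [hne0]
        · rintro ⟨i, rfl⟩
          have hne' : g i ≠ p := hne i
          have hne0 : (Equiv.swap (0 : Fin (n + 2)) p) (g i) ≠ 0 := by
            intro h
            apply hne'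
            exact (Equiv.swap (0 : Fin (n + 2)) p).injective
              (h.trans (Equiv.swap_apply_right (0 : Fin (n + 2)) p).symm)
          refine ⟨((Equiv.swap (0 : Fin (n + 2)) p) (g i)).pred hne0, ?_⟩
          rw [Fin.succ_pred]
          exact Equiv.swap_apply_self _ _ _
      obtain ⟨e, he⟩ := exists_perm_comp _ g hφinj hginj hrange
      simp only [Function.comp_apply]
      rw [← sum_perm_comp (fun i : Fin (n + 1) => (Equiv.swap (0 : Fin (n + 2)) p) i.succ)
        g e he (fun v => mkTensor (n + 1) (fun i => a (v i)))]
      rw [hP, eAug_primitive _ (hp p).1]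
    have hdec : ∑ σ : Equiv.Perm (Fin (n + 2)), mkTensor (n + 2) (fun i => a (σ i))
        = ∑ p : Fin (n + 2), ∑ τ : Equiv.Perm (Fin (n + 1)),
            a p ⊗ₜ[k] mkTensor (n + 1)
              (fun i => a ((Equiv.swap (0 : Fin (n + 2)) p) (τ i).succ)) := by
      refine (Fintype.sum_equiv Equiv.Perm.decomposeFin _
        (fun q => a q.1 ⊗ₜ[k] mkTensor (n + 1)
          (fun i => a ((Equiv.swap (0 : Fin (n + 2)) q.1) (q.2 i).succ))) ?_).trans
        (Fintype.sum_prod_type _)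
      intro σ
      rcases hq : Equiv.Perm.decomposeFin σ with ⟨p, τ⟩
      have hσ : σ = Equiv.Perm.decomposeFin.symm (p, τ) := by
        rw [← hq, Equiv.symm_apply_apply]
      subst hσ
      show (fun i => a (Equiv.Perm.decomposeFin.symm (p, τ) i)) 0 ⊗ₜ[k]
        mkTensor (n + 1) (fun i => a (Equiv.Perm.decomposeFin.symm (p, τ) i.succ)) = _
      beta_reduce
      rw [Equiv.Perm.decomposeFin_symm_apply_zero]
      have harg : (fun i : Fin (n + 1) => a (Equiv.Perm.decomposeFin.symm (p, τ) i.succ))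
          = fun i => a ((Equiv.swap (0 : Fin (n + 2)) p) (τ i).succ) := by
        funext i
        rw [Equiv.Perm.decomposeFin_symm_apply_succ]
      rw [harg]
    rw [hdec]
    refine Finset.sum_congr rfl ?_
    intro p _
    beta_reduce
    rw [hTp p, TensorProduct.tmul_sum]


end BialgLemmas

/-- For primitive elements `a 0, …, a (n-1)` of a bialgebra `H` over a field,
`δ^n (a 0 ⋯ a (n-1)) = ∑_{σ ∈ S_n} a (σ 0) ⊗ ⋯ ⊗ a (σ (n-1))`. -/
theorem stmt9 {k : Type u} [Field k] {H : Type u} [Ring H] [Bialgebra k H]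
    (n : ℕ) (hn : 1 ≤ n) (a : Fin n → H)
    (hprim : ∀ i, Coalgebra.counit (R := k) (A := H) (a i) = 0 ∧
      Coalgebra.comul (R := k) (A := H) (a i) = a i ⊗ₜ[k] 1 + 1 ⊗ₜ[k] a i) :
    deltaPow (Coalgebra.comul (R := k) (A := H)) (Coalgebra.counit (R := k) (A := H))
        (1 : H) n ((List.ofFn a).prod)
      = ∑ σ : Equiv.Perm (Fin n), mkTensor n (fun i => a (σ i)) := by
  obtain ⟨m, rfl⟩ : ∃ m, n = m + 1 := ⟨n - 1, (Nat.succ_pred_eq_of_pos hn).symm⟩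
  exact (key m).2 a hprim
end
end
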